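/- arXiv:math/0402294 — 3 statements merged into one kernel-verified Lean document; each statement's English description precedes it below -/
import Mathlib

section
/- Let n ≥ 1 and N = 2n+2. Define e := Σ_{k=3}^{2n+2} μ_{1k} ∧ μ_{2k}, and for k,l ∈ {3,…,2n+2} define Ω*_{kl} := Σ_{i=1}^{2} μ_{ik} ∧ μ_{il}. Define e* := Σ_σ sgn(σ) Ω*_{σ(3)σ(4)} ∧ Ω*_{σ(5)σ(6)} ∧ ⋯ ∧ Ω*_{σ(2n+1)σ(2n+2)}, the sum over all permutations σ of {3,…,2n+2}. Then e ∧ e* = 0 in ⋀(V). -/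
/- STATEMENT 0: In the exterior algebra of a real vector space `V`, given vectors
`μ i j` (1 ≤ i,j ≤ 2n+2, here 0-indexed) with `μ i j = -μ j i`,
`e := ∑_{k=3}^{2n+2} μ_{1k} ∧ μ_{2k}` and the Pfaffian-type sum
`e* := ∑_σ sgn σ Ω*_{σ(3)σ(4)} ∧ ⋯ ∧ Ω*_{σ(2n+1)σ(2n+2)}` satisfy `e ∧ e* = 0`. -/

variable {V : Type} [AddCommGroup V] [Module ℝ V]

open ExteriorAlgebra

lemma ι_swap (x y : V) : ι ℝ y * ι ℝ x = - (ι ℝ x * ι ℝ y) :=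
  eq_neg_of_add_eq_zero_left (ExteriorAlgebra.ι_add_mul_swap y x)

lemma ι4 (a b c d : V) (h : a = c ∨ a = d ∨ b = c ∨ b = d) :
    (ι ℝ a * ι ℝ b) * (ι ℝ c * ι ℝ d) = 0 := by
  rcases h with rfl | rfl | rfl | rfl
  · rw [show (ι ℝ a * ι ℝ b) * (ι ℝ a * ι ℝ d) = ι ℝ a * (ι ℝ b * ι ℝ a) * ι ℝ d by
      noncomm_ring, ι_swap a b]
    rw [show ι ℝ a * -(ι ℝ a * ι ℝ b) * ι ℝ d = -((ι ℝ a * ι ℝ a) * (ι ℝ b * ι ℝ d)) by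
      noncomm_ring, ι_sq_zero]
    noncomm_ring
  · rw [show (ι ℝ a * ι ℝ b) * (ι ℝ c * ι ℝ a) = ι ℝ a * (ι ℝ b * ι ℝ c) * ι ℝ a by
      noncomm_ring, ι_swap c b]
    rw [show ι ℝ a * -(ι ℝ c * ι ℝ b) * ι ℝ a = -(ι ℝ a * ι ℝ c * (ι ℝ b * ι ℝ a)) by
      noncomm_ring, ι_swap a b]
    rw [show -(ι ℝ a * ι ℝ c * -(ι ℝ a * ι ℝ b)) = ι ℝ a * (ι ℝ c * ι ℝ a) * ι ℝ b by
      noncomm_ring, ι_swap a c]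
    rw [show ι ℝ a * -(ι ℝ a * ι ℝ c) * ι ℝ b = -((ι ℝ a * ι ℝ a) * (ι ℝ c * ι ℝ b)) by
      noncomm_ring, ι_sq_zero]
    noncomm_ring
  · rw [show (ι ℝ a * ι ℝ b) * (ι ℝ b * ι ℝ d) = ι ℝ a * ((ι ℝ b * ι ℝ b) * ι ℝ d) by
      noncomm_ring, ι_sq_zero]
    noncomm_ring
  · rw [show (ι ℝ a * ι ℝ b) * (ι ℝ c * ι ℝ b) = ι ℝ a * (ι ℝ b * ι ℝ c) * ι ℝ b by
      noncomm_ring, ι_swap c b]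
    rw [show ι ℝ a * -(ι ℝ c * ι ℝ b) * ι ℝ b = -(ι ℝ a * ι ℝ c * (ι ℝ b * ι ℝ b)) by
      noncomm_ring, ι_sq_zero]
    noncomm_ring

lemma commι (x y z : V) : Commute (ι ℝ x * ι ℝ y) (ι ℝ z) := by
  unfold Commute SemiconjBy
  rw [show ι ℝ x * ι ℝ y * ι ℝ z = ι ℝ x * (ι ℝ y * ι ℝ z) by noncomm_ring,
    show ι ℝ y * ι ℝ z = -(ι ℝ z * ι ℝ y) from ι_swap z y,
    show ι ℝ x * -(ι ℝ z * ι ℝ y) = -(ι ℝ x * ι ℝ z) * ι ℝ y by noncomm_ring,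
    show ι ℝ x * ι ℝ z = -(ι ℝ z * ι ℝ x) from ι_swap z x]
  noncomm_ring

lemma comm2 (x y z w : V) : Commute (ι ℝ x * ι ℝ y) (ι ℝ z * ι ℝ w) :=
  (commι x y z).mul_right (commι x y w)

/-- column embedding: `{3,…,2n+2}` (0-indexed: `k ↦ k+2`). -/
def col (n : ℕ) (k : Fin (2 * n)) : Fin (2 * n + 2) := ⟨k.1 + 2, by have := k.isLt; omega⟩

/-- `Ω* k l = ∑_{i=1}^{2} μ_{ik} ∧ μ_{il}`, for columns `k, l ∈ {3,…,2n+2}`. -/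
noncomputable def Omst (n : ℕ) (μ : Fin (2 * n + 2) → Fin (2 * n + 2) → V) (k l : Fin (2 * n)) :
    ExteriorAlgebra ℝ V :=
  ∑ i : Fin 2,
    ExteriorAlgebra.ι ℝ (μ ⟨i.1, by have := i.isLt; omega⟩ (col n k)) *
    ExteriorAlgebra.ι ℝ (μ ⟨i.1, by have := i.isLt; omega⟩ (col n l))

/-- `e = ∑_{k=3}^{2n+2} μ_{1k} ∧ μ_{2k}`. -/
noncomputable def eform (n : ℕ) (μ : Fin (2 * n + 2) → Fin (2 * n + 2) → V) :
    ExteriorAlgebra ℝ V :=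
  ∑ k : Fin (2 * n),
    ExteriorAlgebra.ι ℝ (μ ⟨0, by omega⟩ (col n k)) *
    ExteriorAlgebra.ι ℝ (μ ⟨1, by omega⟩ (col n k))

/-- `e* = ∑_{σ} sgn σ · Ω*_{σ(3)σ(4)} ∧ ⋯ ∧ Ω*_{σ(2n+1)σ(2n+2)}`. -/
noncomputable def estform (n : ℕ) (μ : Fin (2 * n + 2) → Fin (2 * n + 2) → V) :
    ExteriorAlgebra ℝ V :=
  ∑ σ : Equiv.Perm (Fin (2 * n)), (Equiv.Perm.sign σ : ℤ) •
    (List.ofFn (fun j : Fin n =>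
      Omst n μ (σ ⟨2 * j.1, by have := j.isLt; omega⟩)
              (σ ⟨2 * j.1 + 1, by have := j.isLt; omega⟩))).prod

lemma commOm (n : ℕ) (μ : Fin (2 * n + 2) → Fin (2 * n + 2) → V) (x y : V) (k l : Fin (2 * n)) :
    Commute (ι ℝ x * ι ℝ y) (Omst n μ k l) :=
  Commute.sum_right _ _ _ (fun i _ => comm2 _ _ _ _)

lemma keyB (n : ℕ) (μ : Fin (2 * n + 2) → Fin (2 * n + 2) → V) (k : Fin (2 * n))
    (L : List (Fin (2 * n) × Fin (2 * n))) (hL : ∃ p ∈ L, p.1 = k ∨ p.2 = k) :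
    (ι ℝ (μ ⟨0, by omega⟩ (col n k)) * ι ℝ (μ ⟨1, by omega⟩ (col n k))) *
      (L.map fun p => Omst n μ p.1 p.2).prod = 0 := by
  induction L with
  | nil => obtain ⟨p, hp, _⟩ := hL; simp at hp
  | cons a L ih =>
    obtain ⟨p, hp, hk⟩ := hL
    rw [List.map_cons, List.prod_cons]
    rcases List.mem_cons.mp hp with rfl | hmem
    · rw [← mul_assoc]
      have h0 : (ι ℝ (μ ⟨0, by omega⟩ (col n k)) * ι ℝ (μ ⟨1, by omega⟩ (col n k))) *
          Omst n μ p.1 p.2 = 0 := by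
        unfold Omst
        rw [Finset.mul_sum]
        apply Finset.sum_eq_zero
        intro i _
        apply ι4
        fin_cases i <;> rcases hk with rfl | rfl <;> simp
      rw [h0, zero_mul]
    · rw [(commOm n μ _ _ a.1 a.2).left_comm, ih ⟨p, hmem, hk⟩, mul_zero]

theorem stmt_0 (n : ℕ) (hn : 1 ≤ n) (μ : Fin (2 * n + 2) → Fin (2 * n + 2) → V)
    (hμ : ∀ i j, μ i j = - μ j i) :
    eform n μ * estform n μ = 0 := by
  unfold eform estform
  rw [Finset.sum_mul]
  apply Finset.sum_eq_zero
  intro k _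
  rw [Finset.mul_sum]
  apply Finset.sum_eq_zero
  intro σ _
  rw [mul_smul_comm]
  set f : Fin n → Fin (2 * n) × Fin (2 * n) := fun j =>
    (σ ⟨2 * j.1, by have := j.isLt; omega⟩, σ ⟨2 * j.1 + 1, by have := j.isLt; omega⟩) with hf
  have hlist : (List.ofFn (fun j : Fin n =>
      Omst n μ (σ ⟨2 * j.1, by have := j.isLt; omega⟩)
              (σ ⟨2 * j.1 + 1, by have := j.isLt; omega⟩)))
      = (List.ofFn f).map (fun p => Omst n μ p.1 p.2) := by
    rw [List.map_ofFn]; rfl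
  rw [hlist, keyB n μ k (List.ofFn f) ?_, smul_zero]
  -- membership
  set m : Fin (2 * n) := σ.symm k with hm
  have hmlt := m.isLt
  refine ⟨f ⟨m.1 / 2, by omega⟩, List.mem_ofFn.mpr ⟨_, rfl⟩, ?_⟩
  rcases Nat.even_or_odd m.1 with he | ho
  · left
    show σ ⟨2 * (m.1 / 2), _⟩ = k
    have h2 := Nat.even_iff.mp he
    have : (⟨2 * (m.1 / 2), by omega⟩ : Fin (2 * n)) = m := by
      apply Fin.ext; simp; omega
    rw [this, hm, Equiv.apply_symm_apply]
  · right
    show σ ⟨2 * (m.1 / 2) + 1, _⟩ = k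
    have h2 := Nat.odd_iff.mp ho
    have : (⟨2 * (m.1 / 2) + 1, by omega⟩ : Fin (2 * n)) = m := by
      apply Fin.ext; simp; omega
    rw [this, hm, Equiv.apply_symm_apply]
end

section
/- For any orthonormal vectors v₁, v₂, v₃, v₄ ∈ V (so that ξ = v₁ ∧ v₂ ∧ v₃ ∧ v₄ is a decomposable unit 4-vector), one has (ξ_{1,1,1,1} + ξ_{2,2,2,2} + ξ_{3,3,3,3} + ξ_{4,4,4,4})² ≤ 1. -/
/- STATEMENT 4: For orthonormal `v₁,…,v₄` in `V = Fin 4 → Fin 4 → ℝ` (so that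
`ξ = v₁∧v₂∧v₃∧v₄` is a decomposable unit 4-vector),
`(ξ_{1,1,1,1} + ξ_{2,2,2,2} + ξ_{3,3,3,3} + ξ_{4,4,4,4})² ≤ 1`. -/

/-- Plücker coordinate `ξ_{i₁,i₂,i₃,i₄} := det M`, `M_{ab} = (v_b)_{i_a, a}`. -/
noncomputable def xi (v : Fin 4 → (Fin 4 → Fin 4 → ℝ)) (i : Fin 4 → Fin 4) : ℝ :=
  Matrix.det (Matrix.of fun a b => v b (i a) a)

open Matrix in
lemma trace_eq_sum_eig {n : ℕ} {P : Matrix (Fin n) (Fin n) ℝ} (hP : P.IsHermitian) :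
    P.trace = ∑ i, hP.eigenvalues i := by
  nth_rewrite 1 [hP.spectral_theorem]
  rw [Unitary.conjStarAlgAut_apply]
  rw [Matrix.trace_mul_comm, ← mul_assoc]
  have h1 : (star (hP.eigenvectorUnitary : Matrix (Fin n) (Fin n) ℝ)) *
      (hP.eigenvectorUnitary : Matrix (Fin n) (Fin n) ℝ) = 1 :=
    (Unitary.mem_iff.mp hP.eigenvectorUnitary.2).1
  rw [h1, one_mul, Matrix.trace_diagonal]
  simp

lemma amgm4 {a b c d : ℝ} (ha : 0 ≤ a) (hb : 0 ≤ b) (hc : 0 ≤ c) (hd : 0 ≤ d) :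
    a * b * c * d ≤ ((a + b + c + d) / 4) ^ 4 := by
  nlinarith [sq_nonneg (a - b), sq_nonneg (c - d), sq_nonneg (a + b - c - d),
    mul_nonneg ha hb, mul_nonneg hc hd, sq_nonneg (a*b - c*d),
    mul_nonneg (mul_nonneg ha hb) hc, mul_nonneg (mul_nonneg hb hc) hd,
    sq_nonneg (a + b + c + d), mul_nonneg (add_nonneg ha hb) (add_nonneg hc hd)]

open Matrix in
theorem stmt_4 (v : Fin 4 → (Fin 4 → Fin 4 → ℝ))
    (hv : ∀ a b, (∑ i : Fin 4, ∑ k : Fin 4, v a i k * v b i k) = if a = b then 1 else 0) :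
    (∑ i : Fin 4, xi v (fun _ => i)) ^ 2 ≤ 1 := by
  classical
  set A : Fin 4 → Matrix (Fin 4) (Fin 4) ℝ := fun i => Matrix.of fun a b => v b i a with hA
  set t : Fin 4 → ℝ := fun i => ((A i)ᴴ * (A i)).trace with htdef
  -- trace formula
  have htrace : ∀ i, t i = ∑ b, ∑ a, v b i a * v b i a := by
    intro i
    simp [htdef, Matrix.trace, Matrix.mul_apply, Matrix.conjTranspose_apply, Matrix.diag, hA]
  have ht_nonneg : ∀ i, 0 ≤ t i := by
    intro i
    rw [htrace i]
    exact Finset.sum_nonneg fun b _ => Finset.sum_nonneg fun a _ => mul_self_nonneg _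
  have htsum : ∑ i, t i = 4 := by
    have : ∑ i : Fin 4, t i = ∑ b : Fin 4, ∑ i : Fin 4, ∑ a : Fin 4, v b i a * v b i a := by
      rw [Finset.sum_comm]
      simp_rw [htrace]
    rw [this]
    have : ∀ b : Fin 4, ∑ i : Fin 4, ∑ a : Fin 4, v b i a * v b i a = 1 := by
      intro b; simpa using hv b b
    simp [this]
  -- per-block determinant bound
  have key : ∀ i, (xi v (fun _ => i)) ^ 2 ≤ ((t i / 4) ^ 2) ^ 2 := by
    intro i
    have hxi : xi v (fun _ => i) = (A i).det := rfl
    have hps : ((A i)ᴴ * (A i)).PosSemidef := Matrix.posSemidef_conjTranspose_mul_self (A i)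
    have hH : ((A i)ᴴ * (A i)).IsHermitian := hps.isHermitian
    have hdet : ((A i)ᴴ * (A i)).det = (A i).det ^ 2 := by
      rw [Matrix.det_mul, Matrix.det_conjTranspose, star_trivial, sq]
    have hprod : ((A i)ᴴ * (A i)).det = ∏ j, hH.eigenvalues j := by
      simpa using hH.det_eq_prod_eigenvalues
    have htr : t i = ∑ j, hH.eigenvalues j := trace_eq_sum_eig hH
    have hnn : ∀ j, 0 ≤ hH.eigenvalues j := hps.eigenvalues_nonneg
    have hamgm : ∏ j, hH.eigenvalues j ≤ ((∑ j, hH.eigenvalues j) / 4) ^ 4 := by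
      rw [Fin.prod_univ_four, Fin.sum_univ_four]
      exact amgm4 (hnn 0) (hnn 1) (hnn 2) (hnn 3)
    calc (xi v (fun _ => i)) ^ 2 = ((A i)ᴴ * (A i)).det := by rw [hxi, hdet]
      _ = ∏ j, hH.eigenvalues j := hprod
      _ ≤ ((∑ j, hH.eigenvalues j) / 4) ^ 4 := hamgm
      _ = ((t i / 4) ^ 2) ^ 2 := by rw [htr]; ring
  -- combine
  have habs : ∀ i, |xi v (fun _ => i)| ≤ (t i / 4) ^ 2 := by
    intro i
    have h1 : |xi v (fun _ => i)| = Real.sqrt ((xi v (fun _ => i)) ^ 2) :=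
      (Real.sqrt_sq_eq_abs _).symm
    rw [h1]
    calc Real.sqrt ((xi v (fun _ => i)) ^ 2) ≤ Real.sqrt (((t i / 4) ^ 2) ^ 2) :=
          Real.sqrt_le_sqrt (key i)
      _ = (t i / 4) ^ 2 := Real.sqrt_sq (sq_nonneg _)
  have h0 := habs 0; have h1 := habs 1; have h2 := habs 2; have h3 := habs 3
  rw [abs_le] at h0 h1 h2 h3
  have e0 := ht_nonneg 0; have e1 := ht_nonneg 1; have e2 := ht_nonneg 2; have e3 := ht_nonneg 3
  rw [Fin.sum_univ_four] at htsum ⊢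
  have hS : (t 0/4)^2 + (t 1/4)^2 + (t 2/4)^2 + (t 3/4)^2 ≤ 1 := by
    nlinarith [mul_nonneg e0 e1, mul_nonneg e0 e2, mul_nonneg e0 e3,
      mul_nonneg e1 e2, mul_nonneg e1 e3, mul_nonneg e2 e3]
  have hle : (xi v fun _ => 0) + (xi v fun _ => 1) + (xi v fun _ => 2) + (xi v fun _ => 3) ≤ 1 := by
    linarith [h0.2, h1.2, h2.2, h3.2]
  have hge : -1 ≤ (xi v fun _ => 0) + (xi v fun _ => 1) + (xi v fun _ => 2) + (xi v fun _ => 3) := by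
    linarith [h0.1, h1.1, h2.1, h3.1]
  nlinarith [hle, hge]
end

section
/- Let u, v be orthonormal vectors in ℂ² regarded as a real inner product space (with ⟨x,y⟩ = Re⟨x,y⟩_ℂ), and let a, b ∈ ℂ² be such that (a, ia, b, ib) is an orthonormal ℝ-basis of ℂ² (i.e., a, b span orthogonal complex lines). Define D(x,y) := ⟨u,x⟩⟨v,y⟩ − ⟨u,y⟩⟨v,x⟩. Then D(a, ia) + D(b, ib) = 1 if and only if v = iu (i.e., if and only if the oriented real 2-plane spanned by (u,v) is a complex line with its complex orientation). -/
/- STATEMENT 15: In ℂ² as a real inner product space (⟨x,y⟩ = Re⟨x,y⟩_ℂ), let u, v be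
orthonormal and (a, ia, b, ib) an orthonormal ℝ-basis. With
`D(x,y) = ⟨u,x⟩⟨v,y⟩ − ⟨u,y⟩⟨v,x⟩`, one has `D(a, ia) + D(b, ib) = 1 ↔ v = iu`. -/

/-- the real inner product `⟨x,y⟩ = Re ⟨x,y⟩_ℂ` on ℂ². -/
noncomputable def rinner (x y : EuclideanSpace ℂ (Fin 2)) : ℝ :=
  (inner ℂ x y : ℂ).re

lemma rinner_smul_right_I (x y : EuclideanSpace ℂ (Fin 2)) :
    rinner x (Complex.I • y) = -(inner ℂ x y : ℂ).im := by
  simp only [rinner]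
  rw [inner_smul_right]
  simp only [Complex.mul_re, Complex.I_re, Complex.I_im]
  ring

theorem stmt_15 (u v a b : EuclideanSpace ℂ (Fin 2))
    (hu : rinner u u = 1) (hv : rinner v v = 1) (huv : rinner u v = 0)
    (hbasis : ∀ p q : Fin 4,
      rinner (![a, Complex.I • a, b, Complex.I • b] p) (![a, Complex.I • a, b, Complex.I • b] q) =
        if p = q then 1 else 0) :
    ((rinner u a * rinner v (Complex.I • a) - rinner u (Complex.I • a) * rinner v a)
      + (rinner u b * rinner v (Complex.I • b) - rinner u (Complex.I • b) * rinner v b)) = 1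
    ↔ v = Complex.I • u := by
  have e00 : rinner a a = 1 := by simpa using hbasis 0 0
  have e01 : rinner a (Complex.I • a) = 0 := by simpa using hbasis 0 1
  have e02 : rinner a b = 0 := by simpa using hbasis 0 2
  have e03 : rinner a (Complex.I • b) = 0 := by simpa using hbasis 0 3
  have e22 : rinner b b = 1 := by simpa using hbasis 2 2
  have e23 : rinner b (Complex.I • b) = 0 := by simpa using hbasis 2 3
  rw [rinner_smul_right_I] at e01 e03 e23
  have haa : (inner ℂ a a : ℂ) = 1 :=
    Complex.ext (by rw [Complex.one_re]; exact e00) (by rw [Complex.one_im]; linarith)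
  have hbb : (inner ℂ b b : ℂ) = 1 :=
    Complex.ext (by rw [Complex.one_re]; exact e22) (by rw [Complex.one_im]; linarith)
  have hab : (inner ℂ a b : ℂ) = 0 :=
    Complex.ext (by rw [Complex.zero_re]; exact e02) (by rw [Complex.zero_im]; linarith)
  have hba : (inner ℂ b a : ℂ) = 0 := by
    rw [← inner_conj_symm, hab, map_zero]
  have hON : Orthonormal ℂ ![a, b] := by
    rw [orthonormal_iff_ite]
    intro i j
    fin_cases i <;> fin_cases j <;>
      simp only [Matrix.cons_val_zero, Matrix.cons_val_one, Matrix.head_cons] <;>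
      simp [haa, hab, hba, hbb, -inner_self_eq_norm_sq_to_K]
  have hcard : Fintype.card (Fin 2) = Module.finrank ℂ (EuclideanSpace ℂ (Fin 2)) := by
    simp
  let B := basisOfOrthonormalOfCardEqFinrank hON hcard
  have hB : ⇑B = ![a, b] := coe_basisOfOrthonormalOfCardEqFinrank hON hcard
  have hdec : ∀ w : EuclideanSpace ℂ (Fin 2), ∃ α β : ℂ, w = α • a + β • b := by
    intro w
    refine ⟨B.repr w 0, B.repr w 1, ?_⟩
    have := B.sum_repr w
    rw [Fin.sum_univ_two, hB] at this
    simpa using this.symm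
  obtain ⟨α, β, hu'⟩ := hdec u
  obtain ⟨γ, δ, hv'⟩ := hdec v
  have hz : (inner ℂ u v : ℂ) = starRingEnd ℂ α * γ + starRingEnd ℂ β * δ := by
    rw [hu', hv']
    simp only [inner_add_left, inner_add_right, inner_smul_left, inner_smul_right,
      haa, hab, hba, hbb, mul_one, mul_zero, add_zero, zero_add]
    ring
  have hua : (inner ℂ u a : ℂ) = starRingEnd ℂ α := by
    rw [hu']
    simp only [inner_add_left, inner_smul_left, haa, hba, mul_one, mul_zero, add_zero]
  have hub : (inner ℂ u b : ℂ) = starRingEnd ℂ β := by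
    rw [hu']
    simp only [inner_add_left, inner_smul_left, hab, hbb, mul_one, mul_zero, zero_add]
  have hva : (inner ℂ v a : ℂ) = starRingEnd ℂ γ := by
    rw [hv']
    simp only [inner_add_left, inner_smul_left, haa, hba, mul_one, mul_zero, add_zero]
  have hvb : (inner ℂ v b : ℂ) = starRingEnd ℂ δ := by
    rw [hv']
    simp only [inner_add_left, inner_smul_left, hab, hbb, mul_one, mul_zero, zero_add]
  have hS : ((rinner u a * rinner v (Complex.I • a) - rinner u (Complex.I • a) * rinner v a)
      + (rinner u b * rinner v (Complex.I • b) - rinner u (Complex.I • b) * rinner v b))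
      = (inner ℂ u v : ℂ).im := by
    rw [rinner_smul_right_I, rinner_smul_right_I, rinner_smul_right_I, rinner_smul_right_I]
    simp only [rinner, hz, hua, hub, hva, hvb, Complex.add_im, Complex.mul_im,
      Complex.mul_re, Complex.conj_re, Complex.conj_im]
    ring
  rw [hS]
  have huu : (inner ℂ u u : ℂ) = 1 :=
    Complex.ext (by rw [Complex.one_re]; exact hu) (by rw [Complex.one_im]; simpa using inner_self_im (𝕜 := ℂ) u)
  have hvv : (inner ℂ v v : ℂ) = 1 :=
    Complex.ext (by rw [Complex.one_re]; exact hv) (by rw [Complex.one_im]; simpa using inner_self_im (𝕜 := ℂ) v)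
  have hvu : (inner ℂ v u : ℂ) = starRingEnd ℂ (inner ℂ u v : ℂ) := (inner_conj_symm v u).symm
  have hnorm : (inner ℂ (v - Complex.I • u) (v - Complex.I • u) : ℂ).re
      = 2 - 2 * (inner ℂ u v : ℂ).im := by
    simp only [inner_sub_left, inner_sub_right, inner_smul_left, inner_smul_right,
      huu, hvv, hvu, Complex.conj_I, Complex.sub_re, Complex.mul_re, Complex.neg_re,
      Complex.neg_im, Complex.I_re, Complex.I_im, Complex.one_re, Complex.one_im,
      Complex.mul_im, Complex.conj_re, Complex.conj_im]
    simp only [Complex.sub_im, Complex.mul_im, Complex.neg_im, Complex.neg_re,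
      Complex.conj_im, Complex.conj_re, Complex.I_im, Complex.I_re, Complex.one_re,
      Complex.one_im]
    ring
  constructor
  · intro h
    have h0 : (inner ℂ (v - Complex.I • u) (v - Complex.I • u) : ℂ).re = 0 := by
      rw [hnorm, h]; ring
    have h0' : (inner ℂ (v - Complex.I • u) (v - Complex.I • u) : ℂ) = 0 :=
      Complex.ext (by rw [Complex.zero_re]; exact h0)
        (by rw [Complex.zero_im]; simpa using inner_self_im (𝕜 := ℂ) (v - Complex.I • u))
    have hw : v - Complex.I • u = 0 := inner_self_eq_zero.mp h0'
    exact sub_eq_zero.mp hw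
  · intro h
    rw [h, inner_smul_right, huu, mul_one, Complex.I_im]
end
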